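/- Let n be a positive integer, γ ∈ ℂ, h ∈ Mat_n(ℂ), and let u, v : ℂ → Mat_n(ℂ) be differentiable functions with u(z) invertible for every z, satisfying the P₄¹ system u' = −u² + 2uv − 2zu + h and v' = −v² + 2uv + 2zv + h + γ·I for all z ∈ ℂ. Then y = u is twice differentiable and satisfies the matrix Painlevé-4 equation y'' = (1/2)(y' + h) y⁻¹ (y' − h) + (3/2)y³ − (1/2)[y', y] + 4z y² + 2z² y − 2y + (1/2)h y + (1/2)y h + 2γ y. -/

import Mathlib

attribute [local instance] Matrix.linftyOpNormedAddCommGroup Matrix.linftyOpNormedSpace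
attribute [local instance] Matrix.linftyOpNormedRing Matrix.linftyOpNormedAlgebra

/-- If `u, v` solve the canonical P₄¹ system with `u(z)` invertible for all
`z`, then `y = u` satisfies the matrix Painlevé-4 equation
`y'' = (1/2)(y' + h)y⁻¹(y' − h) + (3/2)y³ − (1/2)[y', y] + 4zy² + 2z²y − 2y
       + (1/2)hy + (1/2)yh + 2γy`. -/
theorem matrix_P4_equation_from_P41 (n : ℕ) (hn : 0 < n) (γ : ℂ)
    (h : Matrix (Fin n) (Fin n) ℂ)
    (u v : ℂ → Matrix (Fin n) (Fin n) ℂ)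
    (hinv : ∀ z : ℂ, IsUnit (u z))
    (hu : ∀ z : ℂ, HasDerivAt u
      (-(u z) ^ 2 + 2 * (u z * v z) - (2 * z) • u z + h) z)
    (hv : ∀ z : ℂ, HasDerivAt v
      (-(v z) ^ 2 + 2 * (u z * v z) + (2 * z) • v z + h + γ • 1) z) :
    ∀ z : ℂ, HasDerivAt (deriv u)
      ((1 / 2 : ℂ) • ((deriv u z + h) * (u z)⁻¹ * (deriv u z - h))
        + (3 / 2 : ℂ) • (u z) ^ 3
        - (1 / 2 : ℂ) • (deriv u z * u z - u z * deriv u z)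
        + (4 * z) • (u z) ^ 2 + (2 * z ^ 2) • u z - (2 : ℂ) • u z
        + (1 / 2 : ℂ) • (h * u z) + (1 / 2 : ℂ) • (u z * h) + (2 * γ) • u z) z := by
  intro z
  have hderiv : deriv u = fun t => -(u t * u t) + 2 * (u t * v t) - (2 * t) • u t + h := by
    funext t
    have := (hu t).deriv; rw [sq] at this; exact this
  have huz : HasDerivAt u (-(u z * u z) + 2 * (u z * v z) - (2 * z) • u z + h) z := by
    have := hu z; rwa [sq] at this
  have hvz : HasDerivAt v (-(v z) ^ 2 + 2 * (u z * v z) + (2 * z) • v z + h + γ • 1) z := hv z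
  have hc : HasDerivAt (fun t : ℂ => 2 * t) (2 : ℂ) z := by
    simpa using (hasDerivAt_id z).const_mul (2 : ℂ)
  have H := (((huz.mul huz).neg.add ((huz.mul hvz).const_mul 2)).sub (hc.smul huz)).add
    (hasDerivAt_const z h)
  rw [hderiv]
  convert H using 1
  · rfl
  · rfl
  · rfl
  · rfl
  -- eliminate the inverse
  have hdet : IsUnit (u z).det := (Matrix.isUnit_iff_isUnit_det (u z)).mp (hinv z)
  have hainv : (u z)⁻¹ * u z = 1 := Matrix.nonsing_inv_mul (u z) hdet
  have hfac : (-(u z * u z) + 2 * (u z * v z) - (2 * z) • u z + h) - h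
      = u z * (-(u z) + 2 * v z - (2 * z) • 1) := by
    simp only [mul_add, mul_sub, mul_neg, mul_smul_comm, mul_one, two_mul, add_mul]
    abel
  rw [mul_assoc, hfac, ← mul_assoc ((u z)⁻¹), hainv, one_mul]
  simp only [two_mul, mul_add, add_mul, mul_sub, sub_mul, neg_mul, mul_neg, smul_mul_assoc,
    mul_smul_comm, smul_smul, mul_one, one_mul, pow_succ, pow_zero, smul_add, smul_sub,
    smul_neg, neg_neg, mul_assoc, add_zero]
  module
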